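/- Let the reward estimation error satisfy |r̃(i,j) − μ(i,j)| ≤ 3Δ_min/(8N) for all users i ∈ {1,…,N} and servers j ∈ {1,…,K}, and suppose the assignment a' output by the auction satisfies Σᵢ r̃(i, a'(i)) ≥ Σᵢ r̃(i, a⁽ⁿ⁾(i)) − Δ_min/5, where a⁽ⁿ⁾ is optimal under r̃ among feasible assignments. If a* is optimal under μ with uniqueness gap Δ_min (i.e., Σᵢ μ(i,a*(i)) − Σᵢ μ(i,a(i)) ≥ Δ_min for all feasible a ≠ a*), then a' = a*. -/

import Mathlib

theorem debo_assignment_optimal (N K : ℕ) (hN : 0 < N) (hK : 0 < K)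
    (μ rt : Fin N → Fin K → ℝ) (Feasible : (Fin N → Fin K) → Prop)
    (Δmin : ℝ) (hΔ : 0 < Δmin)
    (herr : ∀ i j, |rt i j - μ i j| ≤ 3 * Δmin / (8 * N))
    (an astar a' : Fin N → Fin K)
    (han : Feasible an) (hastar : Feasible astar) (ha' : Feasible a')
    (hanopt : ∀ a, Feasible a → (∑ i, rt i (an i)) ≥ ∑ i, rt i (a i))
    (hmatch : (∑ i, rt i (a' i)) ≥ (∑ i, rt i (an i)) - Δmin / 5)
    (hgap : ∀ a, Feasible a → a ≠ astar →
      (∑ i, μ i (astar i)) - (∑ i, μ i (a i)) ≥ Δmin) :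
    a' = astar := by
  by_contra h
  have hNpos : (0:ℝ) < N := by exact_mod_cast hN
  have key : ∀ a : Fin N → Fin K,
      |(∑ i, rt i (a i)) - ∑ i, μ i (a i)| ≤ 3 * Δmin / 8 := by
    intro a
    have : |∑ i, (rt i (a i) - μ i (a i))| ≤ ∑ i : Fin N, 3 * Δmin / (8 * N) :=
      (Finset.abs_sum_le_sum_abs _ _).trans
        (Finset.sum_le_sum fun i _ => herr i (a i))
    rw [Finset.sum_sub_distrib] at this
    have hs : ∑ _i : Fin N, 3 * Δmin / (8 * N) = 3 * Δmin / 8 := by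
      rw [Finset.sum_const, Finset.card_univ, Fintype.card_fin, nsmul_eq_mul]
      field_simp
    linarith [this, hs ▸ this]
  have h1 := key a'
  have h2 := key astar
  have h3 := hgap a' ha' h
  have h4 := hanopt astar hastar
  have ha1 := abs_le.mp h1
  have ha2 := abs_le.mp h2
  linarith [ha1.1, ha1.2, ha2.1, ha2.2]
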